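/- Let Ω ⊆ ℝ^d be a bounded open set, b₀ > 0, ν₁ > 0 and τ > 0. Let b : ℝ → ℝ be differentiable with b₀ ≤ b'(s) for all s ∈ ℝ, let a : ℝ^d → ℝ^d be monotone (i.e. (a(ξ) − a(η))·(ξ − η) ≥ 0 for all ξ, η), and let K : ℝ → ℝ^d satisfy |K(s) − K(s')| ≤ ν₁ |s − s'| for all s, s' ∈ ℝ. Let v, w : Ω → ℝ be differentiable functions such that v − w ∈ L¹(Ω), b(v) − b(w) ∈ L¹(Ω) and ∇(v − w) ∈ L¹(Ω; ℝ^d). Suppose that for every k > 0 one has ∫_Ω (b(v) − b(w)) T_k(v − w) dx = − τ ∫_{{|v−w| ≤ k}} (a(∇v(x)) − a(∇w(x)))·∇(v − w)(x) dx − τ ∫_{{|v−w| ≤ k}} (K(v(x)) − K(w(x)))·∇(v − w)(x) dx (where the first integral on the right is finite or +∞, being non-negative by monotonicity). Then v = w almost everywhere in Ω. -/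

import Mathlib

open MeasureTheory Filter

/-- Uniqueness argument for the discrete problem: if `b` is differentiable with
`b' ≥ b₀ > 0`, `a` is monotone, `K` is `ν₁`-Lipschitz, and two differentiable
functions `v, w` satisfy, for every `k > 0`, the tested identity
`∫_Ω (b(v) − b(w)) T_k(v − w) = −τ ∫_{{|v−w|≤k}} (a(∇v) − a(∇w))·∇(v−w)
  − τ ∫_{{|v−w|≤k}} (K(v) − K(w))·∇(v−w)`,
then `v = w` almost everywhere in `Ω`. -/
theorem stmt_3 {d : ℕ} (Ω : Set (EuclideanSpace ℝ (Fin d)))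
    (hΩ_open : IsOpen Ω) (hΩ_bdd : Bornology.IsBounded Ω)
    (b₀ ν₁ τ : ℝ) (hb₀ : 0 < b₀) (hν₁ : 0 < ν₁) (hτ : 0 < τ)
    (b : ℝ → ℝ) (hb_diff : Differentiable ℝ b)
    (hb' : ∀ s : ℝ, b₀ ≤ deriv b s)
    (a : EuclideanSpace ℝ (Fin d) → EuclideanSpace ℝ (Fin d))
    (ha_mono : ∀ ξ η : EuclideanSpace ℝ (Fin d), 0 ≤ (inner ℝ (a ξ - a η) (ξ - η) : ℝ))
    (K : ℝ → EuclideanSpace ℝ (Fin d))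
    (hK : ∀ s s' : ℝ, ‖K s - K s'‖ ≤ ν₁ * |s - s'|)
    (v w : EuclideanSpace ℝ (Fin d) → ℝ)
    (hv_diff : ∀ x ∈ Ω, DifferentiableAt ℝ v x)
    (hw_diff : ∀ x ∈ Ω, DifferentiableAt ℝ w x)
    (hvw_int : IntegrableOn (fun x => v x - w x) Ω volume)
    (hbvw_int : IntegrableOn (fun x => b (v x) - b (w x)) Ω volume)
    (hgrad_int : IntegrableOn (fun x => gradient v x - gradient w x) Ω volume)
    (ha_int : ∀ k : ℝ, 0 < k → IntegrableOn
      (fun x => (inner ℝ (a (gradient v x) - a (gradient w x))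
        (gradient v x - gradient w x) : ℝ))
      {x ∈ Ω | |v x - w x| ≤ k} volume)
    (hK_int : ∀ k : ℝ, 0 < k → IntegrableOn
      (fun x => (inner ℝ (K (v x) - K (w x)) (gradient v x - gradient w x) : ℝ))
      {x ∈ Ω | |v x - w x| ≤ k} volume)
    (htest : ∀ k : ℝ, 0 < k →
      ∫ x in Ω, (b (v x) - b (w x)) * max (-k) (min k (v x - w x)) =
        -τ * (∫ x in {x ∈ Ω | |v x - w x| ≤ k},
            (inner ℝ (a (gradient v x) - a (gradient w x))
              (gradient v x - gradient w x) : ℝ))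
          - τ * ∫ x in {x ∈ Ω | |v x - w x| ≤ k},
              (inner ℝ (K (v x) - K (w x)) (gradient v x - gradient w x) : ℝ)) :
    ∀ᵐ x ∂(volume.restrict Ω), v x = w x := by
  classical
  -- the sequence of truncation levels
  set k : ℕ → ℝ := fun n => ((n : ℝ) + 1)⁻¹ with hk_def
  have hk_pos : ∀ n, 0 < k n := by
    intro n; simp only [hk_def]; positivity
  have hk_tendsto : Tendsto k atTop (nhds (0 : ℝ)) := by
    simpa [hk_def, one_div] using (tendsto_one_div_add_atTop_nhds_zero_nat : Tendsto (fun n : ℕ => 1 / ((n : ℝ) + 1)) atTop (nhds 0))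
  -- b is strictly monotone
  have hb_mono : StrictMono b :=
    strictMono_of_deriv_pos fun s => lt_of_lt_of_le hb₀ (hb' s)
  -- continuity of v - w on Ω
  have hf_cont : ContinuousOn (fun x => v x - w x) Ω := fun x hx =>
    (((hv_diff x hx).sub (hw_diff x hx)).continuousAt).continuousWithinAt
  -- the truncation sets are measurable subsets of Ω
  have hs_sub : ∀ n : ℕ, {x ∈ Ω | |v x - w x| ≤ k n} ⊆ Ω := fun n x hx => hx.1
  have hs_meas : ∀ n : ℕ, MeasurableSet {x ∈ Ω | |v x - w x| ≤ k n} := by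
    intro n
    have hopen : IsOpen (Ω ∩ (fun x => |v x - w x|) ⁻¹' Set.Ioi (k n)) :=
      (hf_cont.abs).isOpen_inter_preimage hΩ_open isOpen_Ioi
    have hset : {x ∈ Ω | |v x - w x| ≤ k n} =
        Ω \ (Ω ∩ (fun x => |v x - w x|) ⁻¹' Set.Ioi (k n)) := by
      ext x
      simp only [Set.mem_setOf_eq, Set.mem_diff, Set.mem_inter_iff, Set.mem_preimage,
        Set.mem_Ioi, not_and, not_lt]
      tauto
    rw [hset]
    exact hΩ_open.measurableSet.diff hopen.measurableSet
  -- measurability data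
  have hbm : AEStronglyMeasurable (fun x => b (v x) - b (w x)) (volume.restrict Ω) :=
    hbvw_int.aestronglyMeasurable
  have hfm : AEStronglyMeasurable (fun x => v x - w x) (volume.restrict Ω) :=
    hvw_int.aestronglyMeasurable
  have hgm : AEStronglyMeasurable (fun x => gradient v x - gradient w x)
      (volume.restrict Ω) := hgrad_int.aestronglyMeasurable
  -- the key inequality for each n
  have key : ∀ n : ℕ,
      (∫ x in Ω, (k n)⁻¹ * ((b (v x) - b (w x)) * max (-(k n)) (min (k n) (v x - w x)))) ≤
      τ * ν₁ * ∫ x in Ω,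
        Set.indicator {x ∈ Ω | |v x - w x| ≤ k n}
          (fun x => (k n)⁻¹ * (|v x - w x| * ‖gradient v x - gradient w x‖)) x := by
    intro n
    have hkn := hk_pos n
    -- the monotone term is nonnegative
    have hA : 0 ≤ ∫ x in {x ∈ Ω | |v x - w x| ≤ k n},
        (inner ℝ (a (gradient v x) - a (gradient w x))
          (gradient v x - gradient w x) : ℝ) :=
      integral_nonneg fun x => ha_mono _ _
    -- integrability of the dominating function on the truncation set
    have hgs : IntegrableOn (fun x => ν₁ * (|v x - w x| * ‖gradient v x - gradient w x‖))
        {x ∈ Ω | |v x - w x| ≤ k n} volume := by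
      refine Integrable.mono' ((IntegrableOn.mono_set hgrad_int.norm (hs_sub n)).const_mul (ν₁ * k n)) ?_ ?_
      · exact (((continuous_abs.comp_aestronglyMeasurable hfm).mul hgm.norm).const_mul ν₁).mono_measure
          (Measure.restrict_mono (hs_sub n) le_rfl)
      · filter_upwards [ae_restrict_mem (hs_meas n)] with x hx
        rw [Real.norm_eq_abs, abs_of_nonneg (by positivity)]
        calc ν₁ * (|v x - w x| * ‖gradient v x - gradient w x‖)
            = ν₁ * |v x - w x| * ‖gradient v x - gradient w x‖ := by ring
          _ ≤ ν₁ * k n * ‖gradient v x - gradient w x‖ := by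
              gcongr
              exact hx.2
    -- the K-term is controlled
    have hBb : (∫ x in {x ∈ Ω | |v x - w x| ≤ k n},
          |(inner ℝ (K (v x) - K (w x)) (gradient v x - gradient w x) : ℝ)|) ≤
        ∫ x in {x ∈ Ω | |v x - w x| ≤ k n},
          ν₁ * (|v x - w x| * ‖gradient v x - gradient w x‖) := by
      refine integral_mono_of_nonneg (Eventually.of_forall fun x => abs_nonneg _) hgs
        (Eventually.of_forall fun x => ?_)
      calc |(inner ℝ (K (v x) - K (w x)) (gradient v x - gradient w x) : ℝ)|
          ≤ ‖K (v x) - K (w x)‖ * ‖gradient v x - gradient w x‖ :=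
            abs_real_inner_le_norm _ _
        _ ≤ (ν₁ * |v x - w x|) * ‖gradient v x - gradient w x‖ := by
            gcongr
            exact hK _ _
        _ = ν₁ * (|v x - w x| * ‖gradient v x - gradient w x‖) := by ring
    have hBabs : |∫ x in {x ∈ Ω | |v x - w x| ≤ k n},
          (inner ℝ (K (v x) - K (w x)) (gradient v x - gradient w x) : ℝ)| ≤
        ∫ x in {x ∈ Ω | |v x - w x| ≤ k n},
          ν₁ * (|v x - w x| * ‖gradient v x - gradient w x‖) := by
      refine le_trans ?_ hBb
      simpa [Real.norm_eq_abs] using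
        norm_integral_le_integral_norm (μ := volume.restrict {x ∈ Ω | |v x - w x| ≤ k n})
          (fun x => (inner ℝ (K (v x) - K (w x)) (gradient v x - gradient w x) : ℝ))
    -- the basic estimate before dividing by k n
    have hB : (∫ x in Ω, (b (v x) - b (w x)) * max (-(k n)) (min (k n) (v x - w x))) ≤
        τ * ∫ x in {x ∈ Ω | |v x - w x| ≤ k n},
          ν₁ * (|v x - w x| * ‖gradient v x - gradient w x‖) := by
      rw [htest (k n) hkn]
      set A := ∫ x in {x ∈ Ω | |v x - w x| ≤ k n},
        (inner ℝ (a (gradient v x) - a (gradient w x))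
          (gradient v x - gradient w x) : ℝ) with hA_def
      set B := ∫ x in {x ∈ Ω | |v x - w x| ≤ k n},
        (inner ℝ (K (v x) - K (w x)) (gradient v x - gradient w x) : ℝ) with hB_def
      set C := ∫ x in {x ∈ Ω | |v x - w x| ≤ k n},
        ν₁ * (|v x - w x| * ‖gradient v x - gradient w x‖) with hC_def
      have h1 : 0 ≤ τ * A := mul_nonneg hτ.le hA
      have h2 : τ * (-B) ≤ τ * |B| := mul_le_mul_of_nonneg_left (neg_le_abs B) hτ.le
      have h3 : τ * |B| ≤ τ * C := mul_le_mul_of_nonneg_left hBabs hτ.le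
      linarith
    -- divide by k n
    rw [integral_const_mul, setIntegral_indicator (hs_meas n),
      Set.inter_eq_self_of_subset_right (hs_sub n), integral_const_mul]
    rw [show τ * ν₁ * ((k n)⁻¹ * ∫ x in {x ∈ Ω | |v x - w x| ≤ k n},
          |v x - w x| * ‖gradient v x - gradient w x‖) =
        (k n)⁻¹ * (τ * (ν₁ * ∫ x in {x ∈ Ω | |v x - w x| ≤ k n},
          |v x - w x| * ‖gradient v x - gradient w x‖)) from by ring]
    apply mul_le_mul_of_nonneg_left _ (inv_nonneg.2 hkn.le)
    rw [← integral_const_mul]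
    exact hB
  -- limit of the left-hand side
  have hlim1 : Tendsto (fun n => ∫ x in Ω,
      (k n)⁻¹ * ((b (v x) - b (w x)) * max (-(k n)) (min (k n) (v x - w x)))) atTop
      (nhds (∫ x in Ω, |b (v x) - b (w x)|)) := by
    apply tendsto_integral_of_dominated_convergence (fun x => |b (v x) - b (w x)|)
    · intro n
      refine AEStronglyMeasurable.const_mul (hbm.mul ?_) _
      exact (continuous_const.max (continuous_const.min continuous_id)).comp_aestronglyMeasurable
        hfm
    · exact hbvw_int.abs
    · intro n
      refine Eventually.of_forall fun x => ?_
      have hT : |max (-(k n)) (min (k n) (v x - w x))| ≤ k n := by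
        rw [abs_le]
        exact ⟨le_max_left _ _, max_le (by linarith [hk_pos n]) (min_le_left _ _)⟩
      rw [Real.norm_eq_abs, abs_mul, abs_mul, abs_inv, abs_of_pos (hk_pos n)]
      calc (k n)⁻¹ * (|b (v x) - b (w x)| * |max (-(k n)) (min (k n) (v x - w x))|)
          ≤ (k n)⁻¹ * (|b (v x) - b (w x)| * k n) := by
            gcongr
        _ = |b (v x) - b (w x)| := by
            rw [mul_left_comm, inv_mul_cancel₀ (hk_pos n).ne', mul_one]
    · refine Eventually.of_forall fun x => ?_
      rcases lt_trichotomy (v x - w x) 0 with h | h | h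
      · have hbneg : b (v x) - b (w x) < 0 := sub_neg.2 (hb_mono (by linarith))
        have hev : ∀ᶠ n in atTop, k n < -(v x - w x) :=
          hk_tendsto.eventually_lt_const (by linarith)
        refine Tendsto.congr' ?_ (tendsto_const_nhds (x := |b (v x) - b (w x)|))
        filter_upwards [hev] with n hn
        have h1 : min (k n) (v x - w x) = v x - w x := min_eq_right (by linarith [hk_pos n])
        have h2 : max (-(k n)) (v x - w x) = -(k n) := max_eq_left (by linarith)
        rw [h1, h2, abs_of_neg hbneg]
        rw [mul_left_comm, mul_neg, inv_mul_cancel₀ (hk_pos n).ne']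
        ring
      · have hvw : v x = w x := sub_eq_zero.1 h
        simp [hvw]
      · have hbpos : 0 < b (v x) - b (w x) := sub_pos.2 (hb_mono (by linarith))
        have hev : ∀ᶠ n in atTop, k n < v x - w x :=
          hk_tendsto.eventually_lt_const (by linarith)
        refine Tendsto.congr' ?_ (tendsto_const_nhds (x := |b (v x) - b (w x)|))
        filter_upwards [hev] with n hn
        have h1 : min (k n) (v x - w x) = k n := min_eq_left (by linarith)
        have h2 : max (-(k n)) (k n) = k n := max_eq_right (by linarith [hk_pos n])
        rw [h1, h2, abs_of_pos hbpos]
        rw [mul_left_comm, inv_mul_cancel₀ (hk_pos n).ne', mul_one]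
  -- limit of the right-hand side
  have hlim2 : Tendsto (fun n => ∫ x in Ω,
      Set.indicator {x ∈ Ω | |v x - w x| ≤ k n}
        (fun x => (k n)⁻¹ * (|v x - w x| * ‖gradient v x - gradient w x‖)) x) atTop
      (nhds 0) := by
    have h0 : (0 : ℝ) = ∫ _x in Ω, (0 : ℝ) := by simp
    rw [h0]
    apply tendsto_integral_of_dominated_convergence
      (fun x => ‖gradient v x - gradient w x‖)
    · intro n
      exact ((((continuous_abs.comp_aestronglyMeasurable hfm).mul hgm.norm).const_mul _).indicator (hs_meas n))
    · exact hgrad_int.norm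
    · intro n
      refine Eventually.of_forall fun x => ?_
      by_cases hx : x ∈ {x ∈ Ω | |v x - w x| ≤ k n}
      · rw [Set.indicator_of_mem hx, Real.norm_eq_abs, abs_of_nonneg (by positivity)]
        calc (k n)⁻¹ * (|v x - w x| * ‖gradient v x - gradient w x‖)
            ≤ (k n)⁻¹ * (k n * ‖gradient v x - gradient w x‖) := by
              gcongr
              exact hx.2
          _ = ‖gradient v x - gradient w x‖ := by
              rw [← mul_assoc, inv_mul_cancel₀ (hk_pos n).ne', one_mul]
      · rw [Set.indicator_of_notMem hx]
        simp
    · refine Eventually.of_forall fun x => ?_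
      by_cases hfx : v x - w x = 0
      · refine Tendsto.congr' ?_ (tendsto_const_nhds (x := (0 : ℝ)))
        refine Eventually.of_forall fun n => ?_
        simp [Set.indicator_apply, hfx]
      · have hev : ∀ᶠ n in atTop, k n < |v x - w x| :=
          hk_tendsto.eventually_lt_const (abs_pos.2 hfx)
        refine Tendsto.congr' ?_ (tendsto_const_nhds (x := (0 : ℝ)))
        filter_upwards [hev] with n hn
        exact (Set.indicator_of_notMem (fun hx => absurd hx.2 (not_le.2 hn)) _).symm
  -- conclude that ∫ |b ∘ v - b ∘ w| ≤ 0
  have hI : (∫ x in Ω, |b (v x) - b (w x)|) ≤ 0 := by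
    have h2 := hlim2.const_mul (τ * ν₁)
    rw [mul_zero] at h2
    exact le_of_tendsto_of_tendsto' hlim1 h2 key
  have hI0 : (∫ x in Ω, |b (v x) - b (w x)|) = 0 :=
    le_antisymm hI (integral_nonneg fun x => abs_nonneg _)
  have habs : (fun x => |b (v x) - b (w x)|) =ᵐ[volume.restrict Ω] 0 :=
    (integral_eq_zero_iff_of_nonneg_ae (Eventually.of_forall fun x => abs_nonneg _)
      hbvw_int.abs).1 hI0
  filter_upwards [habs] with x hx
  have hbe : b (v x) = b (w x) := by
    have hx' : |b (v x) - b (w x)| = 0 := by simpa using hx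
    have := abs_eq_zero.1 hx'
    linarith [sub_eq_zero.1 this]
  exact hb_mono.injective hbe
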